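/- Let K be an algebraic closure of the rational function field ℚ(t), and let t also denote the image in K of the independent variable of ℚ(t). There do not exist polynomials A, B ∈ K[X] with B ≠ 0 such that A² − (X⁴ + X² + t·X)·B² = X − 1. -/

import Mathlib

open Polynomial

section DescentLemmas

variable {k : Type*} [Field k]

-- truncation helper
lemma trunc_natDegree_le (p : k[X]) (m : ℕ) (hp : p.natDegree ≤ m + 1) :
    (p - C (p.coeff (m+1)) * X ^ (m+1)).natDegree ≤ m := by
  apply Polynomial.natDegree_le_iff_coeff_eq_zero.mpr
  intro n hn
  rcases eq_or_lt_of_le (Nat.succ_le_of_lt hn) with h | h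
  · simp [← h]
  · rw [Polynomial.coeff_sub, Polynomial.coeff_C_mul, Polynomial.coeff_X_pow]
    rw [Polynomial.coeff_eq_zero_of_natDegree_lt (lt_of_le_of_lt hp h)]
    have : ¬ (n = m + 1) := by omega
    simp [this]

-- second-from-top coefficient of a product
lemma coeff_mul_second (p q : k[X]) (m n : ℕ) (hp : p.natDegree ≤ m + 1)
    (hq : q.natDegree ≤ n + 1) :
    (p * q).coeff (m + n + 1) =
      p.coeff (m+1) * q.coeff n + p.coeff m * q.coeff (n+1) := by
  set a := p.coeff (m+1)
  set b := q.coeff (n+1)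
  set p' := p - C a * X ^ (m+1) with hp'
  set q' := q - C b * X ^ (n+1) with hq'
  have hdp : p'.natDegree ≤ m := trunc_natDegree_le p m hp
  have hdq : q'.natDegree ≤ n := trunc_natDegree_le q n hq
  have hpe : p = p' + C a * X ^ (m+1) := by ring
  have hqe : q = q' + C b * X ^ (n+1) := by ring
  have hcp : p'.coeff m = p.coeff m := by
    rw [hp']; simp [Polynomial.coeff_sub, Polynomial.coeff_C_mul, Polynomial.coeff_X_pow,
      (by omega : ¬ (m = m + 1))]
  have hcq : q'.coeff n = q.coeff n := by
    rw [hq']; simp [Polynomial.coeff_sub, Polynomial.coeff_C_mul, Polynomial.coeff_X_pow,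
      (by omega : ¬ (n = n + 1))]
  calc (p*q).coeff (m+n+1)
      = (p' * q' + (C a * X^(m+1)) * q' + p' * (C b * X^(n+1))
          + (C a * X^(m+1)) * (C b * X^(n+1))).coeff (m+n+1) := by
        rw [hpe, hqe] at *; ring_nf
  _ = a * q.coeff n + p.coeff m * b := by
        rw [Polynomial.coeff_add, Polynomial.coeff_add, Polynomial.coeff_add]
        have h1 : (p' * q').coeff (m+n+1) = 0 := by
          apply Polynomial.coeff_eq_zero_of_natDegree_lt
          calc (p'*q').natDegree ≤ p'.natDegree + q'.natDegree := Polynomial.natDegree_mul_le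
          _ < m + n + 1 := by omega
        have h2 : ((C a * X^(m+1)) * q').coeff (m+n+1) = a * q'.coeff n := by
          rw [mul_assoc, mul_comm (X^(m+1)) q', ← mul_assoc]
          rw [show m+n+1 = n + (m+1) by ring, Polynomial.coeff_mul_X_pow,
            Polynomial.coeff_C_mul]
        have h3 : (p' * (C b * X^(n+1))).coeff (m+n+1) = p'.coeff m * b := by
          rw [mul_comm p' _, mul_assoc, mul_comm (X^(n+1)) p', ← mul_assoc]
          rw [show m+n+1 = m + (n+1) by ring, Polynomial.coeff_mul_X_pow,
            Polynomial.coeff_C_mul]; ring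
        have h4 : ((C a * X^(m+1)) * (C b * X^(n+1))).coeff (m+n+1) = 0 := by
          rw [show (C a * X^(m+1)) * (C b * X^(n+1)) = C (a*b) * X^(m+n+2) by
            rw [Polynomial.C_mul]; ring]
          rw [Polynomial.coeff_C_mul, Polynomial.coeff_X_pow]
          simp [(by omega : ¬ (m+n+1 = m+n+2))]
        rw [h1, h2, h3, h4, hcp, hcq]; ring
  _ = _ := by ring

-- Given A² - (X²+1)Y² = C c (X-1) with Y ≠ 0, c ≠ 0:
lemma deg_structure {A Y : k[X]} {c : k} (hY : Y ≠ 0)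
    (heq : A^2 - (X^2+1) * Y^2 = C c * (X - 1)) :
    A.natDegree = Y.natDegree + 1 ∧
      A.coeff (Y.natDegree + 1) ^ 2 = Y.leadingCoeff ^ 2 := by
  have hX21 : (X^2+1 : k[X]) ≠ 0 := fun h => by simpa using congrArg (fun p => coeff p 0) h
  have hY2 : Y^2 ≠ 0 := pow_ne_zero _ hY
  set n := Y.natDegree with hn
  have hW : ((X^2+1) * Y^2).natDegree = 2*n + 2 := by
    rw [Polynomial.natDegree_mul hX21 hY2, Polynomial.natDegree_pow]
    rw [show (X^2+1 : k[X]) = X^2 + C 1 by simp, Polynomial.natDegree_X_pow_add_C]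
    ring
  have hWlead : ((X^2+1) * Y^2).leadingCoeff = Y.leadingCoeff ^ 2 := by
    rw [Polynomial.leadingCoeff_mul, Polynomial.leadingCoeff_pow]
    rw [show (X^2+1 : k[X]) = X^2 + C 1 by simp]
    rw [show (X^2 + C 1 : k[X]).leadingCoeff = 1 from
      Polynomial.monic_X_pow_add_C 1 (by norm_num)]
    ring
  have hRdeg : (C c * (X - 1)).natDegree ≤ 1 := by
    calc (C c * (X-1)).natDegree ≤ (C c).natDegree + (X-1 : k[X]).natDegree :=
          Polynomial.natDegree_mul_le
    _ ≤ 1 := by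
        rw [Polynomial.natDegree_C, show (X-1:k[X]) = X - C 1 by simp,
          Polynomial.natDegree_X_sub_C]
  have hA : A ≠ 0 := by
    rintro rfl
    have : ((X^2+1) * Y^2).natDegree ≤ 1 := by
      rw [show (X^2+1) * Y^2 = -(C c * (X-1)) by linear_combination -heq]
      rw [Polynomial.natDegree_neg]; exact hRdeg
    omega
  have hdeg : A.natDegree = n + 1 := by
    by_contra hne
    rcases Nat.lt_or_ge A.natDegree (n+1) with h | h
    · -- coeff at 2n+2
      have h1 : (A^2).coeff (2*n+2) = 0 := by
        apply Polynomial.coeff_eq_zero_of_natDegree_lt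
        rw [Polynomial.natDegree_pow]; omega
      have h2 : ((X^2+1) * Y^2).coeff (2*n+2) = Y.leadingCoeff ^ 2 := by
        rw [← hW, Polynomial.coeff_natDegree, hWlead]
      have h3 : (C c * (X-1)).coeff (2*n+2) = 0 :=
        Polynomial.coeff_eq_zero_of_natDegree_lt (by omega)
      have := congrArg (fun p => coeff p (2*n+2)) heq
      simp only [Polynomial.coeff_sub, h1, h2, h3] at this
      have hl2 : Y.leadingCoeff ^ 2 = 0 := by linear_combination -this
      exact hY (Polynomial.leadingCoeff_eq_zero.mp
        (pow_eq_zero_iff (n := 2) (by norm_num) |>.mp hl2))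
    · have h : n + 1 < A.natDegree := lt_of_le_of_ne h (Ne.symm hne)
      have h1 : (A^2).coeff (2 * A.natDegree) = A.leadingCoeff ^ 2 := by
        rw [pow_two, show 2 * A.natDegree = A.natDegree + A.natDegree by ring,
          Polynomial.coeff_mul_degree_add_degree]; ring
      have h2 : ((X^2+1) * Y^2).coeff (2 * A.natDegree) = 0 :=
        Polynomial.coeff_eq_zero_of_natDegree_lt (by omega)
      have h3 : (C c * (X-1)).coeff (2 * A.natDegree) = 0 :=
        Polynomial.coeff_eq_zero_of_natDegree_lt (by omega)
      have := congrArg (fun p => coeff p (2 * A.natDegree)) heq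
      simp only [Polynomial.coeff_sub, h1, h2, h3] at this
      have hl2 : A.leadingCoeff ^ 2 = 0 := by linear_combination this
      exact hA (Polynomial.leadingCoeff_eq_zero.mp
        (pow_eq_zero_iff (n := 2) (by norm_num) |>.mp hl2))
  refine ⟨hdeg, ?_⟩
  have h1 : (A^2).coeff (2*n+2) = A.coeff (n+1) ^ 2 := by
    rw [pow_two, show 2*n+2 = (n+1) + (n+1) by ring,
      Polynomial.coeff_mul_add_eq_of_natDegree_le hdeg.le hdeg.le]; ring
  have h2 : ((X^2+1) * Y^2).coeff (2*n+2) = Y.leadingCoeff ^ 2 := by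
    rw [← hW, Polynomial.coeff_natDegree, hWlead]
  have h3 : (C c * (X-1)).coeff (2*n+2) = 0 :=
    Polynomial.coeff_eq_zero_of_natDegree_lt (by omega)
  have := congrArg (fun p => coeff p (2*n+2)) heq
  simp only [Polynomial.coeff_sub, h1, h2, h3] at this
  linear_combination this

lemma coeff_CX1 (a : k) : (C a * (X - 1)).coeff 1 = a := by
  rw [mul_sub, mul_one, Polynomial.coeff_sub, Polynomial.coeff_C_mul,
    Polynomial.coeff_X_one, Polynomial.coeff_C]
  simp

lemma CX1_natDegree_le (a : k) : (C a * (X-1)).natDegree ≤ 1 := by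
  calc (C a * (X-1)).natDegree ≤ (C a).natDegree + (X-1 : k[X]).natDegree :=
        Polynomial.natDegree_mul_le
  _ ≤ 1 := by
      rw [Polynomial.natDegree_C, show (X-1:k[X]) = X - C 1 by simp,
        Polynomial.natDegree_X_sub_C]

-- the descent step
lemma step (htwo : (2:k) ≠ 0) {A Y : k[X]} {c : k} (hc : c ≠ 0) (hY : Y ≠ 0)
    (hn1 : 1 ≤ Y.natDegree)
    (heq : A^2 - (X^2+1) * Y^2 = C c * (X - 1))
    (hlead : A.coeff (Y.natDegree + 1) = Y.leadingCoeff) :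
    ∃ A' Y' : k[X], Y' ≠ 0 ∧ Y'.natDegree < Y.natDegree ∧
      (A'^2 - (X^2+1) * Y'^2 = C (-c) * (X - 1)) ∧
      Y'.coeff 0 = -A.coeff 0 ∧ A'.coeff 0 = -Y.coeff 0 := by
  obtain ⟨j, hj⟩ : ∃ j, Y.natDegree = j + 1 := ⟨Y.natDegree - 1, by omega⟩
  have hdeg : A.natDegree = j + 2 := by
    have := (deg_structure hY heq).1; omega
  have hlY : Y.leadingCoeff ≠ 0 := Polynomial.leadingCoeff_ne_zero.mpr hY
  have hYd : Y.natDegree ≤ j + 1 := hj.le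
  -- key identity : A.coeff (j+1) = Y.coeff j
  have hkey : A.coeff (j+1) = Y.coeff j := by
    have e := congrArg (fun p => coeff p (2*j+3)) heq
    simp only [Polynomial.coeff_sub] at e
    have h1 : (A^2).coeff (2*j+3) = 2 * (A.coeff (j+2) * A.coeff (j+1)) := by
      rw [pow_two, show 2*j+3 = (j+1)+(j+1)+1 by ring,
        coeff_mul_second A A (j+1) (j+1) (by omega) (by omega)]
      ring
    have hYY1 : (Y^2).coeff (2*j+1) = 2 * (Y.coeff (j+1) * Y.coeff j) := by
      rw [pow_two, show 2*j+1 = j+j+1 by ring, coeff_mul_second Y Y j j (by omega) (by omega)]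
      ring
    have hYY2 : (Y^2).coeff (2*j+1+2) = 0 :=
      Polynomial.coeff_eq_zero_of_natDegree_lt (by rw [Polynomial.natDegree_pow]; omega)
    have h2 : ((X^2+1) * Y^2).coeff (2*j+3) = 2 * (Y.coeff (j+1) * Y.coeff j) := by
      rw [show (X^2+1) * Y^2 = Y^2 * X^2 + Y^2 by ring, Polynomial.coeff_add,
        show 2*j+3 = (2*j+1) + 2 by ring, Polynomial.coeff_mul_X_pow, hYY1, hYY2]
      ring
    have h3 : (C c * (X-1)).coeff (2*j+3) = 0 :=
      Polynomial.coeff_eq_zero_of_natDegree_lt (lt_of_le_of_lt (CX1_natDegree_le c) (by omega))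
    rw [h1, h2, h3] at e
    have hYl : Y.coeff (j+1) = Y.leadingCoeff := by rw [← hj]; rfl
    have hAl : A.coeff (j+2) = Y.leadingCoeff := by rw [← hlead, hj]
    rw [hYl, hAl] at e
    have h4 : (2 * Y.leadingCoeff) * (A.coeff (j+1) - Y.coeff j) = 0 := by
      linear_combination e
    rcases mul_eq_zero.mp h4 with h5 | h5
    · exact absurd h5 (mul_ne_zero htwo hlY)
    · linear_combination h5
  set A' := X*A - (X^2+1)*Y with hA'
  set Y' := X*Y - A with hY'
  have heq' : A'^2 - (X^2+1) * Y'^2 = C (-c) * (X - 1) := by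
    rw [map_neg, hA', hY']
    linear_combination (-1 : k[X]) * heq
  have hcne : (-c : k) ≠ 0 := neg_ne_zero.mpr hc
  have hYne' : Y' ≠ 0 := by
    intro h0
    rw [h0] at heq'
    have heq2 : A'^2 = C (-c) * (X - 1) := by linear_combination heq'
    have hAne' : A' ≠ 0 := by
      intro hA0
      rw [hA0] at heq2
      have := congrArg (fun p => coeff p 1) heq2.symm
      simp only [coeff_CX1] at this
      simp at this
      exact hc this
    have hXm1 : (X - 1 : k[X]) ≠ 0 := by
      intro h
      have := congrArg (fun p => coeff p 1) h
      simp [Polynomial.coeff_one] at this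
    have : (A'^2).natDegree = 1 := by
      rw [heq2]
      rw [Polynomial.natDegree_mul (by simpa using hcne) hXm1]
      simp [show (X-1:k[X]) = X - C 1 by simp, Polynomial.natDegree_X_sub_C]
    rw [Polynomial.natDegree_pow] at this
    omega
  have hdegA' : A'.natDegree ≤ j + 1 := by
    apply Polynomial.natDegree_le_iff_coeff_eq_zero.mpr
    intro m hm
    have hsplit : m = j+2 ∨ m = j+3 ∨ j+4 ≤ m := by omega
    have hcoeffW : ∀ d, ((X^2+1)*Y).coeff (d+2) = Y.coeff d + Y.coeff (d+2) := by
      intro d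
      rw [show (X^2+1)*Y = Y*X^2 + Y by ring, Polynomial.coeff_add,
        Polynomial.coeff_mul_X_pow]
    rw [hA', Polynomial.coeff_sub]
    rcases hsplit with rfl | rfl | hge
    · rw [show j+2 = (j+1)+1 by ring, Polynomial.coeff_X_mul,
        show j+1+1 = j+2 by ring, show j+2 = j + 2 by rfl, hcoeffW j]
      rw [Polynomial.coeff_eq_zero_of_natDegree_lt (by omega : Y.natDegree < j+2)]
      rw [hkey]; ring
    · rw [show j+3 = (j+2)+1 by ring, Polynomial.coeff_X_mul, show j+2+1 = (j+1)+2 by ring,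
        hcoeffW (j+1)]
      rw [Polynomial.coeff_eq_zero_of_natDegree_lt (by omega : Y.natDegree < j+1+2)]
      rw [show A.coeff (j+2) = Y.leadingCoeff by rw [← hlead, hj],
        show Y.coeff (j+1) = Y.leadingCoeff by rw [← hj]; rfl]
      ring
    · obtain ⟨r, rfl⟩ : ∃ r, m = r + 2 := ⟨m - 2, by omega⟩
      rw [show r+2 = (r+1)+1 by ring, Polynomial.coeff_X_mul, show r+1+1 = r+2 by ring,
        hcoeffW r]
      rw [Polynomial.coeff_eq_zero_of_natDegree_lt (by omega : A.natDegree < r+1),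
        Polynomial.coeff_eq_zero_of_natDegree_lt (by omega : Y.natDegree < r),
        Polynomial.coeff_eq_zero_of_natDegree_lt (by omega : Y.natDegree < r+2)]
      ring
  have hdY' : Y'.natDegree < Y.natDegree := by
    have := (deg_structure hYne' heq').1
    omega
  refine ⟨A', Y', hYne', hdY', heq', ?_, ?_⟩
  · rw [hY', Polynomial.coeff_sub, Polynomial.mul_coeff_zero]
    simp
  · rw [hA', Polynomial.coeff_sub, Polynomial.mul_coeff_zero,
      Polynomial.mul_coeff_zero]
    simp

lemma base_case {A Y : k[X]} {c : k} (hc : c ≠ 0) (hY : Y ≠ 0)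
    (h0 : Y.natDegree = 0)
    (heq : A^2 - (X^2+1) * Y^2 = C c * (X - 1))
    (hinv : Y.coeff 0 = 0 ∨ A.coeff 0 = 0) : False := by
  rcases hinv with hY0 | hA0
  · apply hY
    have := Polynomial.eq_C_of_natDegree_eq_zero h0
    rw [hY0] at this; simpa using this
  · have hdeg : A.natDegree = 1 := by have := (deg_structure hY heq).1; omega
    have e := congrArg (fun p => coeff p 1) heq
    simp only [Polynomial.coeff_sub, coeff_CX1] at e
    have h1 : (A^2).coeff 1 = 0 := by
      rw [pow_two, show (1:ℕ) = 0+0+1 by ring,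
        coeff_mul_second A A 0 0 (by omega) (by omega)]
      rw [show (0:ℕ)+1 = 1 by ring, hA0]; ring
    have h2 : ((X^2+1) * Y^2).coeff 1 = 0 := by
      rw [show (X^2+1) * Y^2 = Y^2 * X^2 + Y^2 by ring, Polynomial.coeff_add,
        Polynomial.coeff_mul_X_pow', Polynomial.coeff_eq_zero_of_natDegree_lt
          (by rw [Polynomial.natDegree_pow]; omega : (Y^2).natDegree < 1)]
      norm_num
    rw [h1, h2] at e
    exact hc (by linear_combination -e)

lemma descent (htwo : (2:k) ≠ 0) :
    ∀ (n : ℕ) (A Y : k[X]) (c : k), c ≠ 0 → Y ≠ 0 → Y.natDegree ≤ n →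
      A^2 - (X^2+1) * Y^2 = C c * (X - 1) →
      (Y.coeff 0 = 0 ∨ A.coeff 0 = 0) → False := by
  intro n
  induction n with
  | zero =>
    intro A Y c hc hY hdle heq hinv
    exact base_case hc hY (by omega) heq hinv
  | succ j ih =>
    intro A Y c hc hY hdle heq hinv
    by_cases h0 : Y.natDegree = 0
    · exact base_case hc hY h0 heq hinv
    · have hn1 : 1 ≤ Y.natDegree := by omega
      obtain ⟨hdeg, hsq⟩ := deg_structure hY heq
      have hfac : (A.coeff (Y.natDegree+1) - Y.leadingCoeff) *
          (A.coeff (Y.natDegree+1) + Y.leadingCoeff) = 0 := by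
        linear_combination hsq
      rcases mul_eq_zero.mp hfac with hs | hs
    -- Case lead A = lead Y
      · have hlead : A.coeff (Y.natDegree+1) = Y.leadingCoeff := by linear_combination hs
        obtain ⟨A', Y', hY', hlt, heq', hc1, hc2⟩ := step htwo hc hY hn1 heq hlead
        refine ih A' Y' (-c) (neg_ne_zero.mpr hc) hY' (by omega) heq' ?_
        rcases hinv with h | h
        · right; rw [hc2, h, neg_zero]
        · left; rw [hc1, h, neg_zero]
    -- Case lead A = - lead Y : replace Y by -Y
      · have hYn : (-Y : k[X]) ≠ 0 := neg_ne_zero.mpr hY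
        have hnd : (-Y : k[X]).natDegree = Y.natDegree := Polynomial.natDegree_neg Y
        have heqn : A^2 - (X^2+1) * (-Y)^2 = C c * (X - 1) := by
          linear_combination heq
        have hlead : A.coeff ((-Y : k[X]).natDegree+1) = (-Y : k[X]).leadingCoeff := by
          rw [hnd, Polynomial.leadingCoeff_neg]
          linear_combination hs
        obtain ⟨A', Y', hY', hlt, heq', hc1, hc2⟩ :=
          step htwo hc hYn (by omega) heqn hlead
        refine ih A' Y' (-c) (neg_ne_zero.mpr hc) hY' (by omega : Y'.natDegree ≤ j) heq' ?_
        rcases hinv with h | h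
        · right; rw [hc2, Polynomial.coeff_neg, h, neg_zero, neg_zero]
        · left; rw [hc1, h, neg_zero]

/-- Case 1: no solutions of `A² - (X⁴+X²) B² = X - 1` over any field with `2 ≠ 0`. -/
lemma var1 (htwo : (2:k) ≠ 0) (A B : k[X])
    (heq : A^2 - (X^4+X^2) * B^2 = X - 1) : False := by
  by_cases hB : B = 0
  · subst hB
    rw [show ((0:k[X])^2 : k[X]) = 0 by ring, mul_zero, sub_zero] at heq
    have hA : A ≠ 0 := by
      intro h; rw [h, show ((0:k[X])^2 : k[X]) = 0 by ring] at heq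
      have := congrArg (fun p => coeff p 1) heq.symm
      simp [Polynomial.coeff_one] at this
    have hXm1 : (X - 1 : k[X]) ≠ 0 := by
      intro h
      have := congrArg (fun p => coeff p 1) h
      simp [Polynomial.coeff_one] at this
    have h1 : (A^2).natDegree = 1 := by
      rw [heq, show (X-1:k[X]) = X - C 1 by simp, Polynomial.natDegree_X_sub_C]
    rw [Polynomial.natDegree_pow] at h1
    omega
  · set Y := X * B with hYdef
    have hY : Y ≠ 0 := mul_ne_zero Polynomial.X_ne_zero hB
    have heq2 : A^2 - (X^2+1) * Y^2 = C 1 * (X - 1) := by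
      rw [hYdef, map_one, one_mul]
      linear_combination heq
    exact descent htwo Y.natDegree A Y 1 one_ne_zero hY le_rfl heq2
      (Or.inl (by rw [hYdef, Polynomial.mul_coeff_zero]; simp))

lemma not_isSquare_X_sq_add_one (htwo : (2:k) ≠ 0) :
    ¬ IsSquare ((X:k[X])^2 + 1) := by
  rintro ⟨g, hg⟩
  have hg0 : g ≠ 0 := by
    rintro rfl
    rw [mul_zero] at hg
    have := congrArg (fun p => coeff p 0) hg
    simp [Polynomial.coeff_one] at this
  have hdeg : g.natDegree = 1 := by
    have h2 : ((X:k[X])^2+1).natDegree = 2 := by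
      rw [show ((X:k[X])^2+1) = X^2 + C 1 by simp, Polynomial.natDegree_X_pow_add_C]
    rw [hg, Polynomial.natDegree_mul hg0 hg0] at h2
    omega
  have e1 := congrArg (fun p => coeff p 1) hg
  have h1 : ((X:k[X])^2+1).coeff 1 = 0 := by
    rw [Polynomial.coeff_add, Polynomial.coeff_X_pow, Polynomial.coeff_one]
    norm_num
  rw [show (1:ℕ) = 0+0+1 by ring] at e1
  simp only [coeff_mul_second g g 0 0 (by omega) (by omega)] at e1
  rw [show (0:ℕ)+0+1 = 1 by ring] at e1
  rw [h1] at e1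
  have hb : g.coeff 0 = 0 := by
    have hgl : g.coeff 1 ≠ 0 := by
      have : g.coeff 1 = g.leadingCoeff := by rw [← hdeg]; rfl
      rw [this]
      exact Polynomial.leadingCoeff_ne_zero.mpr hg0
    have h4 : (2 * g.coeff 1) * g.coeff 0 = 0 := by
      linear_combination -e1
    rcases mul_eq_zero.mp h4 with h | h
    · exact absurd h (mul_ne_zero htwo hgl)
    · exact h
  have e0 := congrArg (fun p => coeff p 0) hg
  simp only [Polynomial.mul_coeff_zero, hb, mul_zero] at e0
  rw [Polynomial.coeff_add, Polynomial.coeff_X_pow, Polynomial.coeff_one] at e0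
  norm_num at e0

/-- Case 2: `A² = (X⁴+X²) B²` forces `A = B = 0`. -/
lemma var2 (htwo : (2:k) ≠ 0) (A B : k[X])
    (heq : A^2 = (X^4+X^2) * B^2) (hne : A ≠ 0 ∨ B ≠ 0) : False := by
  by_cases hB : B = 0
  · subst hB
    rw [show ((0:k[X])^2 : k[X]) = 0 by ring, mul_zero, pow_eq_zero_iff (by norm_num)] at heq
    tauto
  · set Y := X * B with hYdef
    have hY : Y ≠ 0 := mul_ne_zero Polynomial.X_ne_zero hB
    have heq2 : A^2 = (X^2+1) * Y^2 := by rw [hYdef]; linear_combination heq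
    have hA : A ≠ 0 := by
      rintro rfl
      rw [show ((0:k[X])^2 : k[X]) = 0 by ring] at heq2
      have := mul_ne_zero (show (X^2+1 : k[X]) ≠ 0 by
        intro h
        have := congrArg (fun p => coeff p 0) h
        simp [Polynomial.coeff_one] at this) (pow_ne_zero 2 hY)
      exact this heq2.symm
    obtain ⟨a', b', c', hrel, ha', hb'⟩ :=
      UniqueFactorizationMonoid.exists_reduced_factors A hA Y
    have hc' : c' ≠ 0 := by
      intro h; rw [h, zero_mul] at ha'; exact hA ha'.symm
    have heq3 : a'^2 = (X^2+1) * b'^2 := by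
      have : c'^2 * a'^2 = c'^2 * ((X^2+1) * b'^2) := by
        rw [← ha', ← hb'] at heq2
        linear_combination heq2
      exact mul_left_cancel₀ (pow_ne_zero 2 hc') this
    have hbu : IsUnit b' := by
      have hdvd : b' ∣ a'^2 := ⟨(X^2+1) * b', by rw [heq3]; ring⟩
      have : IsRelPrime b' (a'^2) := (hrel.symm.pow_right)
      exact this dvd_rfl hdvd
    obtain ⟨u, rfl⟩ := hbu
    apply not_isSquare_X_sq_add_one htwo
    refine ⟨a' * ((u⁻¹ : k[X]ˣ) : k[X]), ?_⟩
    have huu : ((u : k[X]) * ((u⁻¹ : k[X]ˣ) : k[X])) = 1 := u.mul_inv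
    calc (X:k[X])^2 + 1
        = ((X^2+1) * (u:k[X])^2) * (((u⁻¹:k[X]ˣ):k[X])^2) := by
          rw [show ((X:k[X])^2+1) * (u:k[X])^2 * ((u⁻¹:k[X]ˣ):k[X])^2
            = ((X:k[X])^2+1) * (((u:k[X]) * ((u⁻¹:k[X]ˣ):k[X]))^2) by ring, huu]
          ring
    _ = a'^2 * (((u⁻¹:k[X]ˣ):k[X]))^2 := by rw [← heq3]
    _ = (a' * ((u⁻¹:k[X]ˣ):k[X])) * (a' * ((u⁻¹:k[X]ˣ):k[X])) := by ring

end DescentLemmas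

-- dominant element of a list w.r.t. a valuation subring
lemma exists_dominant {K : Type*} [Field K] (V : ValuationSubring K) :
    ∀ L : List K, L ≠ [] →
      ∃ c ∈ L, (∀ x ∈ L, ∃ r ∈ V, x = c * r) ∧ (c = 0 → ∀ x ∈ L, x = 0) := by
  intro L
  induction L with
  | nil => intro h; exact absurd rfl h
  | cons a L ih =>
    intro _
    rcases eq_or_ne L [] with rfl | hLne
    · refine ⟨a, List.mem_cons_self, ?_, ?_⟩
      · intro x hx
        rcases List.mem_singleton.mp hx with rfl
        exact ⟨1, one_mem V, (mul_one x).symm⟩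
      · rintro rfl x hx
        rcases List.mem_singleton.mp hx with rfl; rfl
    · obtain ⟨c, hcL, hcdvd, hczero⟩ := ih hLne
      rcases eq_or_ne a 0 with rfl | ha
      · exact ⟨c, List.mem_cons_of_mem _ hcL, by
          intro x hx
          rcases List.mem_cons.mp hx with rfl | hx
          · exact ⟨0, zero_mem V, by ring⟩
          · exact hcdvd x hx, by
          intro h0 x hx
          rcases List.mem_cons.mp hx with rfl | hx
          · rfl
          · exact hczero h0 x hx⟩
      · rcases eq_or_ne c 0 with rfl | hc
        · refine ⟨a, List.mem_cons_self, ?_, fun h0 => absurd h0 ha⟩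
          intro x hx
          rcases List.mem_cons.mp hx with rfl | hx
          · exact ⟨1, one_mem V, (mul_one x).symm⟩
          · exact ⟨0, zero_mem V, by rw [hczero rfl x hx]; ring⟩
        · rcases V.mem_or_inv_mem (a⁻¹ * c) with hmem | hmem
          · -- a is at least as big: use a
            refine ⟨a, List.mem_cons_self, ?_, fun h0 => absurd h0 ha⟩
            intro x hx
            rcases List.mem_cons.mp hx with rfl | hx
            · exact ⟨1, one_mem V, (mul_one x).symm⟩
            · obtain ⟨r, hr, hxr⟩ := hcdvd x hx
              refine ⟨(a⁻¹ * c) * r, mul_mem hmem hr, ?_⟩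
              rw [hxr]
              field_simp
            -- x = c r = a (a⁻¹ c r)
          · -- c is bigger
            refine ⟨c, List.mem_cons_of_mem _ hcL, ?_, fun h0 => absurd h0 hc⟩
            intro x hx
            rcases List.mem_cons.mp hx with rfl | hx
            · rename_i x _
              refine ⟨(x⁻¹ * c)⁻¹, hmem, ?_⟩
              rw [mul_inv, inv_inv]
              field_simp
            · exact hcdvd x hx

lemma eval_int_ne_zero {K : Type*} [Field K] [Algebra (RatFunc ℚ) K]
    (q : ℤ[X]) (hq : q ≠ 0) :
    Polynomial.eval₂ (Int.castRingHom K) (algebraMap (RatFunc ℚ) K RatFunc.X) q ≠ 0 := by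
  set t' : K := algebraMap (RatFunc ℚ) K RatFunc.X with ht'
  have halg : Function.Injective (algebraMap (RatFunc ℚ) K) :=
    (algebraMap (RatFunc ℚ) K).injective
  set qQ : ℚ[X] := q.map (Int.castRingHom ℚ) with hqQ
  have hqQ0 : qQ ≠ 0 :=
    (Polynomial.map_injective _ Int.cast_injective).ne_iff' (Polynomial.map_zero _) |>.mpr hq
  have key : Polynomial.eval₂ (Int.castRingHom K) t' q
      = algebraMap (RatFunc ℚ) K (algebraMap ℚ[X] (RatFunc ℚ) qQ) := by
    have h1 : algebraMap ℚ[X] (RatFunc ℚ) qQ = Polynomial.aeval (RatFunc.X : RatFunc ℚ) qQ := by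
      rw [← RatFunc.algebraMap_X (K := ℚ), Polynomial.aeval_algebraMap_apply]
      rw [Polynomial.aeval_X_left_apply]
    rw [h1, Polynomial.aeval_def, Polynomial.hom_eval₂, hqQ, Polynomial.eval₂_map]
    congr 1
    exact Subsingleton.elim _ _
  rw [key]
  intro h
  rw [show (0:K) = algebraMap (RatFunc ℚ) K 0 by simp] at h
  have := halg h
  rw [show (0 : RatFunc ℚ) = algebraMap ℚ[X] (RatFunc ℚ) 0 by simp] at this
  exact hqQ0 (RatFunc.algebraMap_injective ℚ this)

/-- Let `K` be an algebraic closure of `ℚ(t)` and let `t` also denote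
the image in `K` of the independent variable. There do not exist `A, B ∈ K[X]` with
`B ≠ 0` such that `A² − (X⁴ + X² + t·X)·B² = X − 1`. -/
theorem no_nontrivial_solution_genus_one_family
    {K : Type*} [Field K] [Algebra (RatFunc ℚ) K] [IsAlgClosure (RatFunc ℚ) K] :
    ¬ ∃ A B : Polynomial K, B ≠ 0 ∧
      A ^ 2 - (X ^ 4 + X ^ 2 + C (algebraMap (RatFunc ℚ) K RatFunc.X) * X) * B ^ 2
        = X - 1 := by
  classical
  rintro ⟨A, B, hB, heq⟩
  set t' : K := algebraMap (RatFunc ℚ) K RatFunc.X with ht'def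
  -- Step 1: build a valuation subring dominating ℤ[X] localized at (X), sending X to t'
  let I : Ideal ℤ[X] := Ideal.span {Polynomial.X}
  have hIprime : I.IsPrime :=
    (Ideal.span_singleton_prime Polynomial.X_ne_zero).mpr Polynomial.prime_X
  let R := Localization.AtPrime I
  let g : ℤ[X] →+* K := Polynomial.eval₂RingHom (Int.castRingHom K) t'
  have hg_units : ∀ y : I.primeCompl, IsUnit (g y) := by
    rintro ⟨y, hy⟩
    have hy0 : y ≠ 0 := by rintro rfl; exact hy (Ideal.zero_mem I)
    exact isUnit_iff_ne_zero.mpr (eval_int_ne_zero y hy0)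
  let f : R →+* K := IsLocalization.lift (M := I.primeCompl) (S := R) hg_units
  have hf : ∀ q : ℤ[X], f (algebraMap ℤ[X] R q) = g q := fun q =>
    IsLocalization.lift_eq hg_units q
  obtain ⟨V, hV, hlocal⟩ := IsLocalRing.exists_factor_valuationRing f
  let fV := f.codRestrict V.toSubring hV
  let tV : V.toSubring := fV (algebraMap ℤ[X] R Polynomial.X)
  have htV1 : (tV : K) = t' := by
    show f (algebraMap ℤ[X] R Polynomial.X) = t'
    rw [hf]; simp [g]
  have htVnu : ¬ IsUnit tV := by
    intro hu
    have := hlocal.map_nonunit _ hu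
    have hX : Polynomial.X ∈ I.primeCompl :=
      (IsLocalization.AtPrime.isUnit_to_map_iff R I Polynomial.X).mp this
    exact hX (Ideal.subset_span rfl)
  have h2u : IsUnit (2 : V.toSubring) := by
    have h2c : (2:ℤ[X]) ∈ I.primeCompl := by
      intro h2m
      have := Ideal.mem_span_singleton.mp h2m
      rw [Polynomial.X_dvd_iff] at this
      norm_num at this
    have : IsUnit (algebraMap ℤ[X] R (2:ℤ[X])) :=
      IsLocalization.map_units R (⟨2, h2c⟩ : I.primeCompl)
    have h2V : IsUnit (fV (algebraMap ℤ[X] R (2:ℤ[X]))) := this.map fV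
    have he : fV (algebraMap ℤ[X] R (2:ℤ[X])) = (2 : V.toSubring) := by
      have h2a : algebraMap ℤ[X] R (2:ℤ[X]) = (2:R) := map_ofNat _ 2
      rw [h2a]; exact map_ofNat fV 2
    rwa [he] at h2V
  -- Step 2: residue field
  haveI : IsLocalRing (↥V.toSubring) := V.isLocalRing
  set k := IsLocalRing.ResidueField V.toSubring with hkdef
  set φ : V.toSubring →+* k := IsLocalRing.residue V.toSubring with hφdef
  have htwo : (2:k) ≠ 0 := by
    have : φ (2 : V.toSubring) = (2:k) := map_ofNat φ 2
    rw [← this]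
    exact (IsLocalRing.residue_ne_zero_iff_isUnit _).mpr h2u
  have hres0 : ∀ x : V.toSubring, ¬ IsUnit x → φ x = 0 := by
    intro x hx
    exact (IsLocalRing.residue_eq_zero_iff _).mpr ((IsLocalRing.mem_maximalIdeal x).mpr hx)
  have hφt : φ tV = 0 := hres0 tV htVnu
  have hinj : Function.Injective (Polynomial.mapRingHom (V.toSubring.subtype)) :=
    Polynomial.map_injective _ Subtype.val_injective
  -- Step 3: the list of coefficients and a dominant one
  set LA : List K := (List.range (A.natDegree+1)).map A.coeff with hLA
  set LB : List K := (List.range (B.natDegree+1)).map B.coeff with hLB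
  set L : List K := LA ++ LB with hL
  have hmemA : ∀ i, i ≤ A.natDegree → A.coeff i ∈ L := by
    intro i hi
    exact List.mem_append_left _ (List.mem_map.mpr ⟨i, List.mem_range.mpr (by omega), rfl⟩)
  have hmemB : ∀ i, i ≤ B.natDegree → B.coeff i ∈ L := by
    intro i hi
    exact List.mem_append_right _ (List.mem_map.mpr ⟨i, List.mem_range.mpr (by omega), rfl⟩)
  have hLne : L ≠ [] := by
    intro h
    have := hmemA 0 (Nat.zero_le _)
    rw [h] at this
    exact List.not_mem_nil this
  obtain ⟨c, hcL, hcdvd, hczero⟩ := exists_dominant V L hLne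
  have hc0 : c ≠ 0 := by
    rintro rfl
    exact hB (Polynomial.leadingCoeff_eq_zero.mp
      (hczero rfl _ (hmemB B.natDegree le_rfl)))
  by_cases hall : ∀ x ∈ L, x ∈ V.toSubring
  -- Case 1 : all coefficients are integral; reduce directly
  · have hAc : (↑A.coeffs : Set K) ⊆ ↑V.toSubring := by
      intro x hx
      obtain ⟨n, hn, rfl⟩ := Polynomial.mem_coeffs_iff.mp hx
      exact hall _ (hmemA n (Polynomial.le_natDegree_of_mem_supp n hn))
    have hBc : (↑B.coeffs : Set K) ⊆ ↑V.toSubring := by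
      intro x hx
      obtain ⟨n, hn, rfl⟩ := Polynomial.mem_coeffs_iff.mp hx
      exact hall _ (hmemB n (Polynomial.le_natDegree_of_mem_supp n hn))
    set At := A.toSubring V.toSubring hAc with hAt
    set Bt := B.toSubring V.toSubring hBc with hBt
    have hEt : At^2 - (X^4+X^2+C tV*X)*Bt^2 = X - 1 := by
      apply hinj
      simp only [Polynomial.coe_mapRingHom, Polynomial.map_sub, Polynomial.map_pow,
        Polynomial.map_mul, Polynomial.map_add, Polynomial.map_one,
        Polynomial.map_X, Polynomial.map_C, Polynomial.map_toSubring]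
      rw [hAt, hBt, Polynomial.map_toSubring, Polynomial.map_toSubring,
        show V.toSubring.subtype tV = t' from htV1]
      exact heq
    have hEk := congrArg (Polynomial.mapRingHom φ) hEt
    simp only [Polynomial.coe_mapRingHom, Polynomial.map_sub, Polynomial.map_pow,
      Polynomial.map_mul, Polynomial.map_add, Polynomial.map_one,
      Polynomial.map_X, Polynomial.map_C] at hEk
    rw [hφt, Polynomial.C_0, zero_mul, add_zero] at hEk
    exact var1 htwo _ _ hEk
  -- Case 2 : scale by the inverse of the dominant coefficient
  · push_neg at hall
    obtain ⟨x₀, hx₀L, hx₀⟩ := hall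
    have hcV : c ∉ V.toSubring := by
      intro hcmem
      obtain ⟨r, hr, hxr⟩ := hcdvd x₀ hx₀L
      rw [hxr] at hx₀
      exact hx₀ (Subring.mul_mem _ hcmem hr)
    have hsV : c⁻¹ ∈ V.toSubring := by
      rcases V.mem_or_inv_mem c with h | h
      · exact absurd h hcV
      · exact h
    set s : K := c⁻¹ with hsdef
    have hs0 : s ≠ 0 := inv_ne_zero hc0
    set sV : V.toSubring := ⟨s, hsV⟩ with hsV'
    have hsnu : ¬ IsUnit sV := by
      intro hu
      obtain ⟨w, hw⟩ := hu.exists_right_inv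
      have hw1 : s * (w : K) = 1 := congrArg Subtype.val hw
      have : (w : K) = c := by
        calc (w : K) = c * (s * w) := by rw [hsdef, ← mul_assoc, mul_inv_cancel₀ hc0, one_mul]
        _ = c := by rw [hw1, mul_one]
      apply hcV
      rw [← this]
      exact w.2
    have hφs : φ sV = 0 := hres0 _ hsnu
    set A1 : K[X] := C s * A with hA1
    set B1 : K[X] := C s * B with hB1
    have heq1 : A1^2 - (X^4+X^2+C t'*X)*B1^2 = (C s)^2 * (X-1) := by
      rw [hA1, hB1]
      linear_combination (C s)^2 * heq
    have hA1c : (↑A1.coeffs : Set K) ⊆ ↑V.toSubring := by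
      intro x hx
      obtain ⟨n, hn, rfl⟩ := Polynomial.mem_coeffs_iff.mp hx
      rw [hA1, Polynomial.coeff_C_mul]
      by_cases hn' : n ≤ A.natDegree
      · obtain ⟨r, hr, hxr⟩ := hcdvd (A.coeff n) (hmemA n hn')
        rw [hxr, show s * (c * r) = r by rw [hsdef, ← mul_assoc, inv_mul_cancel₀ hc0, one_mul]]
        exact hr
      · rw [Polynomial.coeff_eq_zero_of_natDegree_lt (by omega), mul_zero]
        exact Subring.zero_mem _
    have hB1c : (↑B1.coeffs : Set K) ⊆ ↑V.toSubring := by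
      intro x hx
      obtain ⟨n, hn, rfl⟩ := Polynomial.mem_coeffs_iff.mp hx
      rw [hB1, Polynomial.coeff_C_mul]
      by_cases hn' : n ≤ B.natDegree
      · obtain ⟨r, hr, hxr⟩ := hcdvd (B.coeff n) (hmemB n hn')
        rw [hxr, show s * (c * r) = r by rw [hsdef, ← mul_assoc, inv_mul_cancel₀ hc0, one_mul]]
        exact hr
      · rw [Polynomial.coeff_eq_zero_of_natDegree_lt (by omega), mul_zero]
        exact Subring.zero_mem _
    set At := A1.toSubring V.toSubring hA1c with hAt
    set Bt := B1.toSubring V.toSubring hB1c with hBt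
    have hEt : At^2 - (X^4+X^2+C tV*X)*Bt^2 = (C sV)^2 * (X - 1) := by
      apply hinj
      simp only [Polynomial.coe_mapRingHom, Polynomial.map_sub, Polynomial.map_pow,
        Polynomial.map_mul, Polynomial.map_add, Polynomial.map_one,
        Polynomial.map_X, Polynomial.map_C, Polynomial.map_toSubring]
      rw [hAt, hBt, Polynomial.map_toSubring, Polynomial.map_toSubring,
        show V.toSubring.subtype tV = t' from htV1,
        show V.toSubring.subtype sV = s from rfl]
      exact heq1
    have hEk := congrArg (Polynomial.mapRingHom φ) hEt
    simp only [Polynomial.coe_mapRingHom, Polynomial.map_sub, Polynomial.map_pow,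
      Polynomial.map_mul, Polynomial.map_add, Polynomial.map_one,
      Polynomial.map_X, Polynomial.map_C] at hEk
    rw [hφt, hφs, Polynomial.C_0, zero_mul, add_zero] at hEk
    have hEk' : (At.map φ)^2 = (X^4+X^2) * (Bt.map φ)^2 := by
      have h0 : ((0:k[X]))^2 * (X-1) = 0 := by ring
      rw [h0] at hEk
      linear_combination hEk
    -- the dominant coefficient gives a nonzero residue coefficient
    have hwitness : (At.map φ) ≠ 0 ∨ (Bt.map φ) ≠ 0 := by
      rcases List.mem_append.mp hcL with hcA | hcB
      · obtain ⟨i, hi, hci⟩ := List.mem_map.mp hcA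
        left
        intro h0
        have hcoeff : (At.map φ).coeff i = 1 := by
          rw [Polynomial.coeff_map]
          have : At.coeff i = (1 : V.toSubring) := by
            apply Subtype.ext
            rw [Polynomial.coeff_toSubring']
            rw [hA1, Polynomial.coeff_C_mul, hci, hsdef]
            field_simp
            rfl
          rw [this, map_one]
        rw [h0] at hcoeff
        simp at hcoeff
      · obtain ⟨i, hi, hci⟩ := List.mem_map.mp hcB
        right
        intro h0
        have hcoeff : (Bt.map φ).coeff i = 1 := by
          rw [Polynomial.coeff_map]
          have : Bt.coeff i = (1 : V.toSubring) := by
            apply Subtype.ext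
            rw [Polynomial.coeff_toSubring']
            rw [hB1, Polynomial.coeff_C_mul, hci, hsdef]
            field_simp
            rfl
          rw [this, map_one]
        rw [h0] at hcoeff
        simp at hcoeff
    exact var2 htwo _ _ hEk' hwitness
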